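/- arXiv:2312.05004 — 5 statements merged into one kernel-verified Lean document; each statement's English description precedes it below -/
import Mathlib

section
/- Let n ≥ 2, let D be a topological space containing a closed subset Y with a continuous bijection F : Y → S^{n-1}, and let G : D → ℝ^n be a continuous extension of F with ‖G(x)‖ < 1 for x ∉ Y. Then the set of continuous functions on D attaining their maximum at exactly one point is n-lineable; i.e., there is an n-dimensional subspace of C(D, ℝ) all of whose nonzero elements attain their maximum at exactly one point. -/
open RealInnerProductSpace

/-- Let `n ≥ 2`, `Y ⊆ D` closed, `F : Y → S^{n-1}` a continuous bijection, and `G : D → ℝⁿ`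
a continuous extension of `F` with `‖G x‖ < 1` for `x ∉ Y`. Then the set of continuous
functions on `D` attaining their maximum at exactly one point is `n`-lineable: there is an
`n`-dimensional subspace of `C(D, ℝ)` all of whose nonzero elements attain their maximum at
exactly one point. -/
theorem stmt_5 (n : ℕ) (hn : 2 ≤ n) (D : Type*) [TopologicalSpace D] (Y : Set D)
    (hY : IsClosed Y) (F : Y → EuclideanSpace ℝ (Fin n)) (hFc : Continuous F)
    (hFs : ∀ y, ‖F y‖ = 1) (hFi : Function.Injective F)
    (hFsurj : ∀ z : EuclideanSpace ℝ (Fin n), ‖z‖ = 1 → ∃ y : Y, F y = z)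
    (G : D → EuclideanSpace ℝ (Fin n)) (hGc : Continuous G)
    (hGF : ∀ y : Y, G y = F y) (hG1 : ∀ x : D, x ∉ Y → ‖G x‖ < 1) :
    ∃ V : Submodule ℝ C(D, ℝ), Module.finrank ℝ V = n ∧
      ∀ f : C(D, ℝ), f ∈ V → f ≠ 0 → ∃! p : D, ∀ x : D, f x ≤ f p := by
  -- norm of G is at most 1 everywhere
  have hGle : ∀ x : D, ‖G x‖ ≤ 1 := by
    intro x
    by_cases hx : x ∈ Y
    · rw [hGF ⟨x, hx⟩, hFs]
    · exact (hG1 x hx).le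
  -- the linear map a ↦ (x ↦ ⟪G x, a⟫)
  set L : EuclideanSpace ℝ (Fin n) →ₗ[ℝ] C(D, ℝ) :=
    { toFun := fun a => ⟨fun x => ⟪G x, a⟫, hGc.inner continuous_const⟩
      map_add' := fun a b => by ext x; simp [inner_add_right]
      map_smul' := fun c a => by ext x; simp [inner_smul_right] } with hL
  have hLapp : ∀ (a : EuclideanSpace ℝ (Fin n)) (x : D), L a x = ⟪G x, a⟫ := fun _ _ => rfl
  -- key: for a ≠ 0, unique max point
  have key : ∀ a : EuclideanSpace ℝ (Fin n), a ≠ 0 →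
      ∃! p : D, ∀ x : D, L a x ≤ L a p := by
    intro a ha
    have hna : (0 : ℝ) < ‖a‖ := norm_pos_iff.mpr ha
    set u : EuclideanSpace ℝ (Fin n) := ‖a‖⁻¹ • a with hu
    have hun : ‖u‖ = 1 := by
      rw [hu, norm_smul, norm_inv, norm_norm, inv_mul_cancel₀ hna.ne']
    obtain ⟨y₀, hy₀⟩ := hFsurj u hun
    have hGy₀ : G (y₀ : D) = u := by rw [hGF y₀, hy₀]
    have hfy₀ : L a (y₀ : D) = ‖a‖ := by
      rw [hLapp, hGy₀, hu, real_inner_smul_left, real_inner_self_eq_norm_sq]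
      field_simp
    have hub : ∀ x : D, L a x ≤ L a (y₀ : D) := by
      intro x
      rw [hfy₀, hLapp]
      calc ⟪G x, a⟫ ≤ ‖G x‖ * ‖a‖ := real_inner_le_norm _ _
        _ ≤ 1 * ‖a‖ := by nlinarith [hGle x]
        _ = ‖a‖ := one_mul _
    refine ⟨(y₀ : D), hub, ?_⟩
    intro q hq
    have hq1 : ‖a‖ ≤ ⟪G q, a⟫ := by
      have := hq (y₀ : D); rw [hfy₀] at this; rwa [hLapp] at this
    have hq2 : ⟪G q, a⟫ ≤ ‖G q‖ * ‖a‖ := real_inner_le_norm _ _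
    have hGq1 : 1 ≤ ‖G q‖ := by nlinarith
    have hqY : q ∈ Y := by
      by_contra h
      exact absurd hGq1 (not_le.mpr (hG1 q h))
    have hGqn : ‖G q‖ = 1 := le_antisymm (hGle q) hGq1
    have heq : ⟪G q, a⟫ = ‖G q‖ * ‖a‖ := le_antisymm hq2 (by rw [hGqn, one_mul]; exact hq1)
    have := inner_eq_norm_mul_iff_real.mp heq
    rw [hGqn, one_smul] at this
    have h2 : ‖a‖ • G q = ‖a‖ • u := by
      rw [this, hu, smul_smul, mul_inv_cancel₀ hna.ne', one_smul]
    have hGqu : G q = u := smul_right_injective _ hna.ne' h2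
    have : F ⟨q, hqY⟩ = F y₀ := by
      rw [hy₀, ← hGqu, hGF ⟨q, hqY⟩]
    have := hFi this
    exact congrArg Subtype.val this
  -- L is injective
  have hLinj : Function.Injective L := by
    rw [injective_iff_map_eq_zero]
    intro a ha
    by_contra h
    obtain ⟨p, hp, _⟩ := key a h
    have h1 := hp p
    -- show L a p = ‖a‖ > 0 contradicts ha
    have hna : (0 : ℝ) < ‖a‖ := norm_pos_iff.mpr h
    set u : EuclideanSpace ℝ (Fin n) := ‖a‖⁻¹ • a with hu
    have hun : ‖u‖ = 1 := by
      rw [hu, norm_smul, norm_inv, norm_norm, inv_mul_cancel₀ hna.ne']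
    obtain ⟨y₀, hy₀⟩ := hFsurj u hun
    have hGy₀ : G (y₀ : D) = u := by rw [hGF y₀, hy₀]
    have hfy₀ : L a (y₀ : D) = ‖a‖ := by
      rw [hLapp, hGy₀, hu, real_inner_smul_left, real_inner_self_eq_norm_sq]
      field_simp
    rw [ha] at hfy₀
    simp at hfy₀
    exact hna.ne' hfy₀.symm
  refine ⟨LinearMap.range L, ?_, ?_⟩
  · rw [LinearMap.finrank_range_of_inj hLinj, finrank_euclideanSpace_fin]
  · rintro f ⟨a, rfl⟩ hf
    have ha : a ≠ 0 := fun h => hf (by rw [h, map_zero])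
    exact key a ha
end

section
/- For every n ≥ 1, the set Ĉ₀(ℝ^n) of continuous functions f : ℝ^n → ℝ with lim_{‖x‖→∞} f(x) = 0 that attain their maximum at exactly one point is n-lineable: there exists an n-dimensional vector subspace V of C(ℝ^n, ℝ) such that every nonzero f ∈ V tends to 0 at infinity and attains its maximum at a unique point. -/
open Real

/-- Key scalar inequality: `√2 * s ≤ exp (s² - 1/2)`. -/
lemma stmt7_aux1 (s : ℝ) : Real.sqrt 2 * s ≤ Real.exp (s ^ 2 - 1 / 2) := by
  have h1 : s ^ 2 - 1 / 2 + 1 ≤ Real.exp (s ^ 2 - 1 / 2) := Real.add_one_le_exp _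
  have h2 : (Real.sqrt 2) ^ 2 = 2 := Real.sq_sqrt (by norm_num)
  nlinarith [sq_nonneg (Real.sqrt 2 * s - 1)]

/-- Strict version when `s ≠ (√2)⁻¹`. -/
lemma stmt7_aux2 (s : ℝ) (hs : s ≠ (Real.sqrt 2)⁻¹) :
    Real.sqrt 2 * s < Real.exp (s ^ 2 - 1 / 2) := by
  have h2 : (Real.sqrt 2) ^ 2 = 2 := Real.sq_sqrt (by norm_num)
  have hpos : (0 : ℝ) < Real.sqrt 2 := Real.sqrt_pos.mpr (by norm_num)
  rcases eq_or_ne (s ^ 2 - 1 / 2) 0 with h | h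
  · -- s² = 1/2, so s = -(√2)⁻¹ since s ≠ (√2)⁻¹
    have hs2 : s ^ 2 = 1 / 2 := by linarith
    have hinv : ((Real.sqrt 2)⁻¹) ^ 2 = 1 / 2 := by
      rw [inv_pow, h2]; norm_num
    have : (s - (Real.sqrt 2)⁻¹) * (s + (Real.sqrt 2)⁻¹) = 0 := by
      nlinarith
    rcases mul_eq_zero.mp this with h' | h'
    · exact absurd (by linarith) hs
    · have hsneg : s = -(Real.sqrt 2)⁻¹ := by linarith
      rw [h, Real.exp_zero, hsneg]
      have : Real.sqrt 2 * (Real.sqrt 2)⁻¹ = 1 := mul_inv_cancel₀ (ne_of_gt hpos)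
      nlinarith
  · have h1 : s ^ 2 - 1 / 2 + 1 < Real.exp (s ^ 2 - 1 / 2) := Real.add_one_lt_exp h
    nlinarith [sq_nonneg (Real.sqrt 2 * s - 1)]

/-- Bound: `s * exp (-s²) ≤ (√2)⁻¹ * exp (-(1/2))`. -/
lemma stmt7_bound (s : ℝ) : s * Real.exp (-s ^ 2) ≤ (Real.sqrt 2)⁻¹ * Real.exp (-(1 / 2)) := by
  have hpos : (0 : ℝ) < Real.sqrt 2 := Real.sqrt_pos.mpr (by norm_num)
  have h := stmt7_aux1 s
  have he : Real.exp (s ^ 2 - 1 / 2) * Real.exp (-s ^ 2) = Real.exp (-(1 / 2)) := by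
    rw [← Real.exp_add]; ring_nf
  have hexp : (0 : ℝ) < Real.exp (-s ^ 2) := Real.exp_pos _
  have := mul_le_mul_of_nonneg_right h (le_of_lt hexp)
  calc s * Real.exp (-s ^ 2) = (Real.sqrt 2)⁻¹ * (Real.sqrt 2 * s * Real.exp (-s ^ 2)) := by
        field_simp
    _ ≤ (Real.sqrt 2)⁻¹ * (Real.exp (s ^ 2 - 1 / 2) * Real.exp (-s ^ 2)) := by
        apply mul_le_mul_of_nonneg_left this (by positivity)
    _ = (Real.sqrt 2)⁻¹ * Real.exp (-(1 / 2)) := by rw [he]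

/-- Strict bound when `s ≠ (√2)⁻¹`. -/
lemma stmt7_bound_strict (s : ℝ) (hs : s ≠ (Real.sqrt 2)⁻¹) :
    s * Real.exp (-s ^ 2) < (Real.sqrt 2)⁻¹ * Real.exp (-(1 / 2)) := by
  have hpos : (0 : ℝ) < Real.sqrt 2 := Real.sqrt_pos.mpr (by norm_num)
  have h := stmt7_aux2 s hs
  have he : Real.exp (s ^ 2 - 1 / 2) * Real.exp (-s ^ 2) = Real.exp (-(1 / 2)) := by
    rw [← Real.exp_add]; ring_nf
  have hexp : (0 : ℝ) < Real.exp (-s ^ 2) := Real.exp_pos _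
  have := mul_lt_mul_of_pos_right h hexp
  calc s * Real.exp (-s ^ 2) = (Real.sqrt 2)⁻¹ * (Real.sqrt 2 * s * Real.exp (-s ^ 2)) := by
        field_simp
    _ < (Real.sqrt 2)⁻¹ * (Real.exp (s ^ 2 - 1 / 2) * Real.exp (-s ^ 2)) := by
        apply mul_lt_mul_of_pos_left this (by positivity)
    _ = (Real.sqrt 2)⁻¹ * Real.exp (-(1 / 2)) := by rw [he]

/-- For every `n ≥ 1`, the set of continuous functions `ℝⁿ → ℝ` vanishing at infinity that
attain their maximum at exactly one point is `n`-lineable: there is an `n`-dimensional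
subspace `V` of `C(ℝⁿ, ℝ)` such that every nonzero `f ∈ V` tends to `0` at infinity and
attains its maximum at a unique point. -/
theorem stmt_7 (n : ℕ) (hn : 1 ≤ n) :
    ∃ V : Submodule ℝ C(EuclideanSpace ℝ (Fin n), ℝ), Module.finrank ℝ V = n ∧
      ∀ f : C(EuclideanSpace ℝ (Fin n), ℝ), f ∈ V → f ≠ 0 →
        (∀ ε > (0 : ℝ), ∃ R > (0 : ℝ), ∀ x, R < ‖x‖ → |f x| < ε) ∧
        (∃! p : EuclideanSpace ℝ (Fin n), ∀ x, f x ≤ f p) := by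
  set E := EuclideanSpace ℝ (Fin n)
  have hsq2 : (0 : ℝ) < Real.sqrt 2 := Real.sqrt_pos.mpr (by norm_num)
  -- The linear map a ↦ (x ↦ ⟪a,x⟫ * exp(-‖x‖²))
  have cont : ∀ a : E, Continuous fun x : E => (inner ℝ a x : ℝ) * Real.exp (-‖x‖ ^ 2) :=
    fun a => ((continuous_const.inner continuous_id).mul
      (Real.continuous_exp.comp ((continuous_norm.pow 2).neg)))
  let L : E →ₗ[ℝ] C(E, ℝ) :=
    { toFun := fun a => ⟨fun x => (inner ℝ a x : ℝ) * Real.exp (-‖x‖ ^ 2), cont a⟩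
      map_add' := fun a b => by
        ext x
        simp [inner_add_left]; ring
      map_smul' := fun c a => by
        ext x
        simp [inner_smul_left]; ring }
  have hLapp : ∀ (a : E) (x : E), (L a) x = (inner ℝ a x : ℝ) * Real.exp (-‖x‖ ^ 2) :=
    fun a x => rfl
  have hLinj : Function.Injective L := by
    rw [injective_iff_map_eq_zero]
    intro a ha
    have := DFunLike.congr_fun ha a
    rw [hLapp] at this
    simp only [ContinuousMap.zero_apply] at this
    have hinner : (inner ℝ a a : ℝ) = 0 := by
      rcases mul_eq_zero.mp this with h | h
      · exact h
      · exact absurd h (ne_of_gt (Real.exp_pos _))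
    exact inner_self_eq_zero.mp hinner
  refine ⟨LinearMap.range L, ?_, ?_⟩
  · rw [LinearMap.finrank_range_of_inj hLinj, finrank_euclideanSpace_fin]
  intro f hf hf0
  obtain ⟨a, rfl⟩ := hf
  have ha : a ≠ 0 := by
    rintro rfl
    exact hf0 (map_zero L)
  have hna : (0 : ℝ) < ‖a‖ := norm_pos_iff.mpr ha
  constructor
  · -- vanishing at infinity
    intro ε hε
    refine ⟨max (‖a‖ / ε) 1, lt_max_of_lt_right one_pos, ?_⟩
    intro x hx
    have hx1 : (1 : ℝ) < ‖x‖ := lt_of_le_of_lt (le_max_right _ _) hx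
    have hx0 : (0 : ℝ) < ‖x‖ := lt_trans one_pos hx1
    rw [hLapp]
    have h1 : |(inner ℝ a x : ℝ)| ≤ ‖a‖ * ‖x‖ := abs_real_inner_le_norm a x
    have h2 : Real.exp (-‖x‖ ^ 2) ≤ (‖x‖ ^ 2)⁻¹ := by
      rw [Real.exp_neg]
      apply inv_anti₀ (by positivity)
      calc ‖x‖ ^ 2 ≤ ‖x‖ ^ 2 + 1 := by linarith
        _ ≤ Real.exp (‖x‖ ^ 2) := Real.add_one_le_exp _
    have hxe : (0 : ℝ) < Real.exp (-‖x‖ ^ 2) := Real.exp_pos _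
    have : |(inner ℝ a x : ℝ) * Real.exp (-‖x‖ ^ 2)| ≤ ‖a‖ * ‖x‖ * (‖x‖ ^ 2)⁻¹ := by
      rw [abs_mul, abs_of_pos hxe]
      exact mul_le_mul h1 h2 (le_of_lt hxe) (by positivity)
    have heq : ‖a‖ * ‖x‖ * (‖x‖ ^ 2)⁻¹ = ‖a‖ / ‖x‖ := by
      field_simp
    rw [heq] at this
    refine lt_of_le_of_lt this ?_
    rw [div_lt_iff₀ hx0]
    have hR : ‖a‖ / ε < ‖x‖ := lt_of_le_of_lt (le_max_left _ _) hx
    calc ‖a‖ = ε * (‖a‖ / ε) := by field_simp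
      _ < ε * ‖x‖ := by exact mul_lt_mul_of_pos_left hR hε
  · -- unique maximum at p = ((√2)⁻¹ * ‖a‖⁻¹) • a
    set c : ℝ := (Real.sqrt 2)⁻¹ * ‖a‖⁻¹ with hc
    have hcpos : 0 < c := by positivity
    set p : E := c • a with hp
    have hnp : ‖p‖ = (Real.sqrt 2)⁻¹ := by
      rw [hp, norm_smul, Real.norm_eq_abs, abs_of_pos hcpos, hc]
      field_simp
    have hip : (inner ℝ a p : ℝ) = (Real.sqrt 2)⁻¹ * ‖a‖ := by
      rw [hp, real_inner_smul_right, real_inner_self_eq_norm_sq, hc]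
      field_simp
    have hfp : (L a) p = ‖a‖ * ((Real.sqrt 2)⁻¹ * Real.exp (-(1 / 2))) := by
      rw [hLapp, hip, hnp]
      have : (((Real.sqrt 2)⁻¹ : ℝ)) ^ 2 = 1 / 2 := by
        rw [inv_pow, Real.sq_sqrt (by norm_num : (2:ℝ) ≥ 0)]; norm_num
      rw [this]; ring
    have hub : ∀ x : E, (L a) x ≤ ‖a‖ * ((Real.sqrt 2)⁻¹ * Real.exp (-(1 / 2))) := by
      intro x
      rw [hLapp]
      calc (inner ℝ a x : ℝ) * Real.exp (-‖x‖ ^ 2)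
          ≤ ‖a‖ * ‖x‖ * Real.exp (-‖x‖ ^ 2) :=
            mul_le_mul_of_nonneg_right (real_inner_le_norm a x) (le_of_lt (Real.exp_pos _))
        _ = ‖a‖ * (‖x‖ * Real.exp (-‖x‖ ^ 2)) := by ring
        _ ≤ ‖a‖ * ((Real.sqrt 2)⁻¹ * Real.exp (-(1 / 2))) :=
            mul_le_mul_of_nonneg_left (stmt7_bound ‖x‖) (le_of_lt hna)
    refine ⟨p, fun x => by rw [hfp]; exact hub x, ?_⟩
    intro q hq
    -- q is also a max point, show q = p
    have hfq : (L a) q = ‖a‖ * ((Real.sqrt 2)⁻¹ * Real.exp (-(1 / 2))) :=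
      le_antisymm (hub q) (by rw [← hfp]; exact hq p)
    -- First: ‖q‖ = (√2)⁻¹
    have hnq : ‖q‖ = (Real.sqrt 2)⁻¹ := by
      by_contra hne
      have h1 : (L a) q ≤ ‖a‖ * (‖q‖ * Real.exp (-‖q‖ ^ 2)) := by
        rw [hLapp]
        calc (inner ℝ a q : ℝ) * Real.exp (-‖q‖ ^ 2)
            ≤ ‖a‖ * ‖q‖ * Real.exp (-‖q‖ ^ 2) :=
              mul_le_mul_of_nonneg_right (real_inner_le_norm a q) (le_of_lt (Real.exp_pos _))
          _ = ‖a‖ * (‖q‖ * Real.exp (-‖q‖ ^ 2)) := by ring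
      have h2 : ‖a‖ * (‖q‖ * Real.exp (-‖q‖ ^ 2)) <
          ‖a‖ * ((Real.sqrt 2)⁻¹ * Real.exp (-(1 / 2))) :=
        mul_lt_mul_of_pos_left (stmt7_bound_strict ‖q‖ hne) hna
      rw [hfq] at h1
      linarith
    -- Second: equality in Cauchy–Schwarz
    have hiq : (inner ℝ a q : ℝ) = ‖a‖ * ‖q‖ := by
      have h1 : (inner ℝ a q : ℝ) * Real.exp (-‖q‖ ^ 2) =
          ‖a‖ * ((Real.sqrt 2)⁻¹ * Real.exp (-(1 / 2))) := by
        rw [← hLapp]; exact hfq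
      have h2 : (((Real.sqrt 2)⁻¹ : ℝ)) ^ 2 = 1 / 2 := by
        rw [inv_pow, Real.sq_sqrt (by norm_num : (2:ℝ) ≥ 0)]; norm_num
      have h3 : Real.exp (-‖q‖ ^ 2) = Real.exp (-(1 / 2)) := by rw [hnq, h2]
      rw [h3] at h1
      have h4 : (0 : ℝ) < Real.exp (-(1 / 2)) := Real.exp_pos _
      have : (inner ℝ a q : ℝ) = ‖a‖ * (Real.sqrt 2)⁻¹ := by
        field_simp at h1 ⊢
        nlinarith
      rw [this, hnq]
    have heq : ‖q‖ • a = ‖a‖ • q := inner_eq_norm_mul_iff_real.mp hiq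
    -- conclude q = p
    have hqa : q = (‖a‖⁻¹ * ‖q‖) • a := by
      have h := congrArg (fun v => (‖a‖⁻¹ : ℝ) • v) heq
      simp only [smul_smul] at h
      rw [inv_mul_cancel₀ (ne_of_gt hna), one_smul] at h
      exact h.symm
    rw [hqa, hnq, hp, hc, mul_comm]
end

section
/- There is no (n+1)-dimensional vector subspace V of C₀(ℝ^n) such that every nonzero function in V is alternating and attains its maximum at exactly one point. -/
open scoped ZeroAtInfty
open ZeroAtInftyContinuousMap Filter Metric

namespace Stmt13Aux

variable {n : ℕ}

local notation "E" => EuclideanSpace ℝ (Fin n)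

lemma abs_le_norm (g : C₀(E, ℝ)) (x : E) : |g x| ≤ ‖g‖ := by
  have h := BoundedContinuousFunction.norm_coe_le_norm g.toBCF x
  simpa [ZeroAtInftyContinuousMap.norm_toBCF_eq_norm] using h

lemma bdd (g : C₀(E, ℝ)) : BddAbove (Set.range fun x => g x) := by
  refine ⟨‖g‖, ?_⟩
  rintro _ ⟨x, rfl⟩
  exact (abs_le.mp (abs_le_norm g x)).2

noncomputable def M (g : C₀(E, ℝ)) : ℝ := ⨆ x, g x

lemma M_le (g h : C₀(E, ℝ)) : M g ≤ M h + ‖g - h‖ := by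
  refine ciSup_le fun x => ?_
  have h1 : g x = h x + (g - h) x := by simp
  have h2 : (g - h) x ≤ ‖g - h‖ := (abs_le.mp (abs_le_norm (g - h) x)).2
  have h3 : h x ≤ M h := le_ciSup (bdd h) x
  linarith

lemma M_lipschitz : LipschitzWith 1 (M (n := n)) := by
  refine LipschitzWith.of_dist_le_mul fun g h => ?_
  simp only [NNReal.coe_one, one_mul, Real.dist_eq, dist_eq_norm, Real.norm_eq_abs]
  rw [abs_sub_le_iff]
  constructor
  · have := M_le g h; linarith
  · have h2 := M_le h g
    have h3 : ‖h - g‖ = ‖g - h‖ := norm_sub_rev h g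
    linarith

lemma le_M (g : C₀(E, ℝ)) (x : E) : g x ≤ M g := le_ciSup (bdd g) x

end Stmt13Aux

/-- Assuming the theorem that for every compact `K ⊆ ℝⁿ`, any subspace of `C(K)` all of whose
nonzero elements attain their maximum at exactly one point has dimension at most `n`, there is
no `(n+1)`-dimensional subspace `V` of `C₀(ℝⁿ)` such that every nonzero function in `V` is
alternating and attains its maximum at exactly one point. -/
theorem stmt_13 (n : ℕ)
    (hK : ∀ K : Set (EuclideanSpace ℝ (Fin n)), IsCompact K →
      ∀ V : Submodule ℝ C(K, ℝ),
        (∀ f : C(K, ℝ), f ∈ V → f ≠ 0 → ∃! p : K, ∀ x : K, f x ≤ f p) →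
        Module.rank ℝ V ≤ n) :
    ¬ ∃ V : Submodule ℝ C₀(EuclideanSpace ℝ (Fin n), ℝ),
        Module.finrank ℝ V = n + 1 ∧
        ∀ g : C₀(EuclideanSpace ℝ (Fin n), ℝ), g ∈ V → g ≠ 0 →
          (∃ x y : EuclideanSpace ℝ (Fin n), g x < 0 ∧ 0 < g y) ∧
          (∃! p : EuclideanSpace ℝ (Fin n), ∀ x, g x ≤ g p) := by
  open Stmt13Aux in
  rintro ⟨V, hdim, hprop⟩
  haveI : Module.Free ℝ V := Module.Free.of_divisionRing ℝ V
  haveI := Module.finite_of_finrank_eq_succ hdim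
  haveI : Nontrivial V :=
    Module.nontrivial_of_finrank_pos (R := ℝ) (by omega : 0 < Module.finrank ℝ V)
  set S : Set V := Metric.sphere (0 : V) 1 with hS
  have hScpt : IsCompact S := isCompact_sphere 0 1
  have hSne : S.Nonempty := (NormedSpace.sphere_nonempty (x := (0 : V)) (r := 1)).mpr zero_le_one
  have hMcont : Continuous fun g : V => M (g : C₀(EuclideanSpace ℝ (Fin n), ℝ)) :=
    M_lipschitz.continuous.comp continuous_subtype_val
  obtain ⟨g₀, hg₀S, hg₀min⟩ := hScpt.exists_isMinOn hSne hMcont.continuousOn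
  set m : ℝ := M (g₀ : C₀(EuclideanSpace ℝ (Fin n), ℝ)) with hm
  -- m > 0
  have hMpos : ∀ g : V, g ≠ 0 → 0 < M (g : C₀(EuclideanSpace ℝ (Fin n), ℝ)) := by
    intro g hg
    have hgne : (g : C₀(EuclideanSpace ℝ (Fin n), ℝ)) ≠ 0 := by
      simpa [Submodule.coe_eq_zero] using hg
    obtain ⟨⟨x, y, _, hy⟩, _⟩ := hprop g g.2 hgne
    exact hy.trans_le (le_M _ y)
  have hmpos : 0 < m := by
    apply hMpos
    intro h0
    simp [h0, hS] at hg₀S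
  -- finite subcover of the sphere by m/4-balls
  have hcover : S ⊆ ⋃ j : S, Metric.ball (j : V) (m / 4) := by
    intro g hg
    exact Set.mem_iUnion.mpr ⟨⟨g, hg⟩, Metric.mem_ball_self (by linarith)⟩
  obtain ⟨t, ht⟩ := hScpt.elim_finite_subcover (fun j : S => Metric.ball (j : V) (m / 4))
    (fun j => Metric.isOpen_ball) hcover
  -- for each center, a compact set outside which it is small
  have hsmall : ∀ j : S, ∃ K : Set (EuclideanSpace ℝ (Fin n)), IsCompact K ∧
      ∀ x ∉ K, |((j : V) : C₀(EuclideanSpace ℝ (Fin n), ℝ)) x| < m / 4 := by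
    intro j
    have hz := zero_at_infty ((j : V) : C₀(EuclideanSpace ℝ (Fin n), ℝ))
    have hev : ∀ᶠ x in Filter.cocompact (EuclideanSpace ℝ (Fin n)),
        |((j : V) : C₀(EuclideanSpace ℝ (Fin n), ℝ)) x| < m / 4 := by
      have := Metric.tendsto_nhds.mp hz (m / 4) (by linarith)
      simpa [Real.dist_eq] using this
    rw [Filter.eventually_iff, Filter.mem_cocompact] at hev
    obtain ⟨K, hKc, hKsub⟩ := hev
    exact ⟨K, hKc, fun x hx => hKsub hx⟩
  choose Kf hKfc hKfsmall using hsmall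
  set K₀ : Set (EuclideanSpace ℝ (Fin n)) := ⋃ j ∈ t, Kf j with hK₀
  have hK₀c : IsCompact K₀ := t.isCompact_biUnion fun j _ => hKfc j
  -- every max point of a nonzero element of V lies in K₀
  have hmem : ∀ g : V, g ≠ 0 → ∀ p : EuclideanSpace ℝ (Fin n),
      (∀ x, (g : C₀(EuclideanSpace ℝ (Fin n), ℝ)) x ≤ (g : C₀(EuclideanSpace ℝ (Fin n), ℝ)) p) →
      p ∈ K₀ := by
    intro g hg p hp
    set u : V := ‖g‖⁻¹ • g with hu
    have hgnorm : ‖g‖ ≠ 0 := by simpa [norm_eq_zero] using hg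
    have huS : u ∈ S := by
      have e1 : ‖(u : C₀(EuclideanSpace ℝ (Fin n), ℝ))‖
          = ‖(‖g‖⁻¹ : ℝ)‖ * ‖(g : C₀(EuclideanSpace ℝ (Fin n), ℝ))‖ := by
        have e0 : (u : C₀(EuclideanSpace ℝ (Fin n), ℝ))
            = ‖g‖⁻¹ • (g : C₀(EuclideanSpace ℝ (Fin n), ℝ)) := rfl
        rw [e0]; exact norm_smul (‖g‖⁻¹) (g : C₀(EuclideanSpace ℝ (Fin n), ℝ))
      have e2 : ‖u‖ = 1 := by
        rw [show ‖u‖ = ‖(u : C₀(EuclideanSpace ℝ (Fin n), ℝ))‖ from rfl, e1, norm_inv, norm_norm]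
        exact inv_mul_cancel₀ hgnorm
      exact (mem_sphere_zero_iff_norm (E := V)).mpr e2
    have hup : ∀ x, (u : C₀(EuclideanSpace ℝ (Fin n), ℝ)) x
        ≤ (u : C₀(EuclideanSpace ℝ (Fin n), ℝ)) p := by
      intro x
      have : (u : C₀(EuclideanSpace ℝ (Fin n), ℝ)) = ‖g‖⁻¹ • (g : C₀(EuclideanSpace ℝ (Fin n), ℝ)) := rfl
      rw [this]
      simp only [ZeroAtInftyContinuousMap.coe_smul, Pi.smul_apply, smul_eq_mul]
      exact mul_le_mul_of_nonneg_left (hp x) (by positivity)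
    have hmle : m ≤ (u : C₀(EuclideanSpace ℝ (Fin n), ℝ)) p := by
      have h1 : m ≤ M (u : C₀(EuclideanSpace ℝ (Fin n), ℝ)) := hg₀min huS
      have h2 : M (u : C₀(EuclideanSpace ℝ (Fin n), ℝ)) ≤ (u : C₀(EuclideanSpace ℝ (Fin n), ℝ)) p :=
        ciSup_le hup
      linarith
    by_contra hpK
    obtain ⟨j, hjt, hjball⟩ : ∃ j ∈ t, u ∈ Metric.ball (j : V) (m / 4) := by
      have := ht huS
      simpa using this
    have hpKj : p ∉ Kf j := fun hmemj => hpK (Set.mem_biUnion hjt hmemj)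
    have h1 : |((j : V) : C₀(EuclideanSpace ℝ (Fin n), ℝ)) p| < m / 4 := hKfsmall j p hpKj
    have h2 : ‖(u : C₀(EuclideanSpace ℝ (Fin n), ℝ)) - ((j : V) : C₀(EuclideanSpace ℝ (Fin n), ℝ))‖ < m / 4 := by
      have := hjball
      rw [Metric.mem_ball, Subtype.dist_eq, dist_eq_norm] at this
      simpa using this
    have h3 : (u : C₀(EuclideanSpace ℝ (Fin n), ℝ)) p
        - ((j : V) : C₀(EuclideanSpace ℝ (Fin n), ℝ)) p < m / 4 := by
      calc (u : C₀(EuclideanSpace ℝ (Fin n), ℝ)) p - ((j : V) : C₀(EuclideanSpace ℝ (Fin n), ℝ)) p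
          = ((u : C₀(EuclideanSpace ℝ (Fin n), ℝ)) - ((j : V) : C₀(EuclideanSpace ℝ (Fin n), ℝ))) p := by
            simp
        _ ≤ |((u : C₀(EuclideanSpace ℝ (Fin n), ℝ)) - ((j : V) : C₀(EuclideanSpace ℝ (Fin n), ℝ))) p| :=
            le_abs_self _
        _ ≤ ‖(u : C₀(EuclideanSpace ℝ (Fin n), ℝ)) - ((j : V) : C₀(EuclideanSpace ℝ (Fin n), ℝ))‖ :=
            abs_le_norm _ p
        _ < m / 4 := h2
    have h4 : ((j : V) : C₀(EuclideanSpace ℝ (Fin n), ℝ)) p < m / 4 := (abs_lt.mp h1).2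
    linarith
  -- restriction map
  let L : V →ₗ[ℝ] C(K₀, ℝ) :=
    { toFun := fun g => ContinuousMap.restrict K₀
        ((g : C₀(EuclideanSpace ℝ (Fin n), ℝ)) : C(EuclideanSpace ℝ (Fin n), ℝ))
      map_add' := by intro a b; ext x; simp
      map_smul' := by intro c a; ext x; simp }
  have hLapp : ∀ (g : V) (x : K₀), L g x = (g : C₀(EuclideanSpace ℝ (Fin n), ℝ)) (x : EuclideanSpace ℝ (Fin n)) :=
    fun g x => rfl
  have hLinj : Function.Injective L := by
    rw [injective_iff_map_eq_zero]
    intro g hg0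
    by_contra hg
    have hgne : (g : C₀(EuclideanSpace ℝ (Fin n), ℝ)) ≠ 0 := by
      simpa [Submodule.coe_eq_zero] using hg
    obtain ⟨⟨x, y, _, hy⟩, p, hp, _⟩ := hprop g g.2 hgne
    have hpK : p ∈ K₀ := hmem g hg p hp
    have : (g : C₀(EuclideanSpace ℝ (Fin n), ℝ)) p = 0 := by
      have := congrFun (congrArg DFunLike.coe hg0) ⟨p, hpK⟩
      simpa [hLapp] using this
    have := (hy.trans_le (hp y)).trans_le this.le
    exact lt_irrefl 0 this
  set W : Submodule ℝ C(K₀, ℝ) := LinearMap.range L with hW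
  -- W satisfies the hypothesis
  have hWprop : ∀ f : C(K₀, ℝ), f ∈ W → f ≠ 0 → ∃! p : K₀, ∀ x : K₀, f x ≤ f p := by
    rintro f ⟨g, rfl⟩ hfne
    have hg : g ≠ 0 := by rintro rfl; simp at hfne
    have hgne : (g : C₀(EuclideanSpace ℝ (Fin n), ℝ)) ≠ 0 := by
      simpa [Submodule.coe_eq_zero] using hg
    obtain ⟨_, p, hp, hpuniq⟩ := hprop g g.2 hgne
    have hpK : p ∈ K₀ := hmem g hg p hp
    refine ⟨⟨p, hpK⟩, fun x => ?_, ?_⟩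
    · simpa [hLapp] using hp (x : EuclideanSpace ℝ (Fin n))
    · rintro ⟨q, hqK⟩ hq
      have hpq : (g : C₀(EuclideanSpace ℝ (Fin n), ℝ)) p ≤ (g : C₀(EuclideanSpace ℝ (Fin n), ℝ)) q := by
        simpa [hLapp] using hq ⟨p, hpK⟩
      have : ∀ x, (g : C₀(EuclideanSpace ℝ (Fin n), ℝ)) x ≤ (g : C₀(EuclideanSpace ℝ (Fin n), ℝ)) q :=
        fun x => (hp x).trans hpq
      exact Subtype.ext (hpuniq q this)
  have hrankW : Module.rank ℝ W = (n + 1 : ℕ) := by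
    rw [hW, rank_range_of_injective L hLinj, ← hdim]
    exact (Module.finrank_eq_rank ℝ V).symm
  have := hK K₀ hK₀c W hWprop
  rw [hrankW] at this
  have : (n + 1 : ℕ) ≤ n := by exact_mod_cast this
  omega
end

section
/- Let n ≥ 2 and let A be any set. Every n-dimensional vector space V of functions f : A → ℝ contains an (n−1)-dimensional subspace W such that every nonzero g ∈ W is alternating, i.e., there exist x, y ∈ A with g(x) < 0 < g(y). -/
open Module

/-- A closed pointed convex cone in a Euclidean space admits a linear functional that is
strictly positive on its nonzero elements. -/
lemma exists_pos_functional_of_cone {n : ℕ} (Q : Set (EuclideanSpace ℝ (Fin n)))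
    (hconv : Convex ℝ Q) (hclosed : IsClosed Q) (h0 : (0 : EuclideanSpace ℝ (Fin n)) ∈ Q)
    (hcone : ∀ (t : ℝ) q, 0 ≤ t → q ∈ Q → t • q ∈ Q)
    (hpointed : ∀ q ∈ Q, -q ∈ Q → q = 0) :
    ∃ φ : EuclideanSpace ℝ (Fin n) →ₗ[ℝ] ℝ,
      (∀ q ∈ Q, 0 ≤ φ q) ∧ ∀ q ∈ Q, q ≠ 0 → 0 < φ q := by
  -- Step 1: for each nonzero `u ∈ Q`, a functional nonnegative on `Q` and positive at `u`.
  have step : ∀ u : EuclideanSpace ℝ (Fin n), u ∈ Q → u ≠ 0 →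
      ∃ f : EuclideanSpace ℝ (Fin n) →L[ℝ] ℝ, (∀ q ∈ Q, 0 ≤ f q) ∧ 0 < f u := by
    intro u hu hne
    have hnu : -u ∉ Q := fun h => hne (hpointed u hu h)
    obtain ⟨f, c, hfc, hcf⟩ := geometric_hahn_banach_closed_point hconv hclosed hnu
    have hc0 : 0 < c := by simpa using hfc 0 h0
    have hle : ∀ q ∈ Q, f q ≤ 0 := by
      intro q hq
      by_contra h
      push_neg at h
      have ht : ((c / f q + 1) : ℝ) * f q < c := by
        simpa using hfc ((c / f q + 1) • q) (hcone _ q (by positivity) hq)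
      have : (c / f q + 1) * f q = c + f q := by field_simp
      linarith [this ▸ ht]
    have hfu : c < -(f u) := by simpa using hcf
    refine ⟨-f, fun q hq => by simpa using hle q hq, ?_⟩
    have : (-f) u = -(f u) := rfl
    linarith [this]
  -- Step 2: compactness of the unit sphere intersected with `Q`.
  set S : Set (EuclideanSpace ℝ (Fin n)) := Metric.sphere 0 1 ∩ Q with hSdef
  have hScompact : IsCompact S :=
    (isCompact_sphere (0 : EuclideanSpace ℝ (Fin n)) 1).inter_right hclosed
  have hmem : ∀ u : S, (u : EuclideanSpace ℝ (Fin n)) ∈ Q ∧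
      (u : EuclideanSpace ℝ (Fin n)) ≠ 0 := by
    rintro ⟨u, hu1, hu2⟩
    refine ⟨hu2, fun h => ?_⟩
    have h1 : ‖u‖ = 1 := by simpa using hu1
    have h2 : u = 0 := h
    rw [h2] at h1
    simp at h1
  have hch : ∀ u : S, ∃ f : EuclideanSpace ℝ (Fin n) →L[ℝ] ℝ,
      (∀ q ∈ Q, 0 ≤ f q) ∧ 0 < f u :=
    fun u => step u (hmem u).1 (hmem u).2
  choose F hF1 hF2 using hch
  have hopen : ∀ u : S, IsOpen {v : EuclideanSpace ℝ (Fin n) | 0 < F u v} :=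
    fun u => isOpen_lt continuous_const (F u).continuous
  have hcover : S ⊆ ⋃ u : S, {v : EuclideanSpace ℝ (Fin n) | 0 < F u v} := by
    intro v hv
    exact Set.mem_iUnion.2 ⟨⟨v, hv⟩, hF2 ⟨v, hv⟩⟩
  obtain ⟨t, ht⟩ := hScompact.elim_finite_subcover _ hopen hcover
  refine ⟨(∑ u ∈ t, F u : EuclideanSpace ℝ (Fin n) →L[ℝ] ℝ).toLinearMap, ?_, ?_⟩
  · intro q hq
    simp only [ContinuousLinearMap.coe_coe, ContinuousLinearMap.coe_sum',
      Finset.sum_apply]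
    exact Finset.sum_nonneg fun u _ => hF1 u q hq
  · intro q hq hqne
    have hnq : (0 : ℝ) < ‖q‖ := norm_pos_iff.mpr hqne
    set v : EuclideanSpace ℝ (Fin n) := ‖q‖⁻¹ • q with hvdef
    have hvQ : v ∈ Q := hcone (‖q‖⁻¹) q (inv_nonneg.2 hnq.le) hq
    have hvS : v ∈ S := by
      constructor
      · simp only [Metric.mem_sphere, dist_zero_right, hvdef, norm_smul]
        rw [norm_inv, norm_norm]
        field_simp
      · exact hvQ
    obtain ⟨u, hu⟩ := Set.mem_iUnion.1 (ht hvS)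
    simp only [Set.mem_iUnion, Set.mem_setOf_eq] at hu
    obtain ⟨hut, huv⟩ := hu
    have hq_eq : q = ‖q‖ • v := by
      rw [hvdef, smul_smul, mul_inv_cancel₀ (ne_of_gt hnq), one_smul]
    simp only [ContinuousLinearMap.coe_coe, ContinuousLinearMap.coe_sum',
      Finset.sum_apply]
    refine Finset.sum_pos' (fun u' _ => hF1 u' q hq) ⟨u, hut, ?_⟩
    rw [hq_eq, map_smul]
    exact mul_pos hnq huv

/-- Every `n`-dimensional space (`n ≥ 2`) of real-valued functions on a set `A` contains an
`(n-1)`-dimensional subspace every nonzero element of which is alternating. -/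
theorem stmt_14 (n : ℕ) (hn : 2 ≤ n) (A : Type*) (V : Submodule ℝ (A → ℝ))
    (hV : Module.finrank ℝ V = n) :
    ∃ W : Submodule ℝ (A → ℝ), W ≤ V ∧ Module.finrank ℝ W = n - 1 ∧
      ∀ g : A → ℝ, g ∈ W → g ≠ 0 → ∃ x y : A, g x < 0 ∧ 0 < g y := by
  have hfd : FiniteDimensional ℝ V := FiniteDimensional.of_finrank_pos (by omega)
  set E := EuclideanSpace ℝ (Fin n)
  have b : Basis (Fin n) ℝ V := Module.finBasisOfFinrankEq ℝ V hV
  let e : E ≃ₗ[ℝ] V := (WithLp.linearEquiv 2 ℝ (Fin n → ℝ)) ≪≫ₗ b.equivFun.symm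
  -- The cone of vectors mapping to pointwise nonnegative functions.
  set Q : Set E := {v : E | ∀ a : A, 0 ≤ ((e v : A → ℝ) a)} with hQdef
  have hQconv : Convex ℝ Q := by
    intro x hx y hy s r hs hr hsr
    intro a
    have : (e (s • x + r • y) : A → ℝ) a = s * (e x : A → ℝ) a + r * (e y : A → ℝ) a := by
      simp [map_add, map_smul]
    rw [this]
    have := hx a; have := hy a
    positivity
  have hQclosed : IsClosed Q := by
    have : Q = ⋂ a : A, ((LinearMap.proj a : (A → ℝ) →ₗ[ℝ] ℝ) ∘ₗ V.subtype ∘ₗ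
        (e : E →ₗ[ℝ] V)) ⁻¹' Set.Ici 0 := by
      ext v
      simp [hQdef, Set.mem_iInter]
    rw [this]
    exact isClosed_iInter fun a =>
      IsClosed.preimage (LinearMap.continuous_of_finiteDimensional _) isClosed_Ici
  have hQ0 : (0 : E) ∈ Q := by intro a; simp
  have hQcone : ∀ (s : ℝ) q, 0 ≤ s → q ∈ Q → s • q ∈ Q := by
    intro s q hs hq a
    have : (e (s • q) : A → ℝ) a = s * (e q : A → ℝ) a := by simp [map_smul]
    rw [this]
    exact mul_nonneg hs (hq a)
  have hQpointed : ∀ q ∈ Q, -q ∈ Q → q = 0 := by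
    intro q hq hnq
    have h1 : ∀ a, (e q : A → ℝ) a = 0 := by
      intro a
      have h2 : (e (-q) : A → ℝ) a = -((e q : A → ℝ) a) := by simp [map_neg]
      have := hnq a
      rw [h2] at this
      linarith [hq a]
    have : e q = 0 := by
      ext a
      exact h1 a
    simpa using e.injective (by simpa using this)
  obtain ⟨φ, hφ0, hφpos⟩ :=
    exists_pos_functional_of_cone Q hQconv hQclosed hQ0 hQcone hQpointed
  -- A nonzero functional on V detecting nonnegative elements.
  have key : ∃ ψ : V →ₗ[ℝ] ℝ, ψ ≠ 0 ∧
      ∀ v : V, v ≠ 0 → (∀ a : A, 0 ≤ ((v : A → ℝ) a)) → ψ v ≠ 0 := by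
    have hdetect : ∀ v : V, v ≠ 0 → (∀ a : A, 0 ≤ ((v : A → ℝ) a)) →
        0 < φ (e.symm v) := by
      intro v hv hnn
      have hmem : e.symm v ∈ Q := by
        intro a
        simpa [e.apply_symm_apply] using hnn a
      refine hφpos _ hmem ?_
      intro h
      apply hv
      have := congrArg e h
      simpa using this
    by_cases hQne : ∃ v : V, v ≠ 0 ∧ ∀ a : A, 0 ≤ ((v : A → ℝ) a)
    · obtain ⟨v, hv, hnn⟩ := hQne
      refine ⟨φ ∘ₗ (e.symm : V →ₗ[ℝ] E), ?_, ?_⟩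
      · intro h
        have : φ (e.symm v) = 0 := by
          have := congrFun (congrArg DFunLike.coe h) v
          simpa using this
        exact absurd this (ne_of_gt (hdetect v hv hnn))
      · intro w hw hnn'
        exact ne_of_gt (hdetect w hw hnn')
    · push_neg at hQne
      refine ⟨b.coord ⟨0, by omega⟩, ?_, ?_⟩
      · intro h
        have : b.coord ⟨0, by omega⟩ (b ⟨0, by omega⟩) = 0 := by
          have := congrFun (congrArg DFunLike.coe h) (b ⟨0, by omega⟩)
          simp at this
        simp at this
      · intro v hv hnn
        obtain ⟨a, ha⟩ := hQne v hv
        exact absurd (hnn a) (not_le.2 ha)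
  obtain ⟨ψ, hψne, hψ⟩ := key
  refine ⟨(LinearMap.ker ψ).map V.subtype, Submodule.map_subtype_le _ _, ?_, ?_⟩
  · -- dimension count
    rw [Submodule.finrank_map_subtype_eq]
    have hsurj : Function.Surjective ψ := by
      obtain ⟨v, hv⟩ : ∃ v, ψ v ≠ 0 := by
        by_contra h
        push_neg at h
        exact hψne (LinearMap.ext fun v => h v)
      intro c
      exact ⟨(c / ψ v) • v, by rw [map_smul, smul_eq_mul]; field_simp⟩
    have h1 := LinearMap.finrank_range_add_finrank_ker ψ
    rw [LinearMap.range_eq_top.2 hsurj, finrank_top, hV] at h1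
    have : finrank ℝ ℝ = 1 := Module.finrank_self ℝ
    omega
  · -- every nonzero element is alternating
    intro g hg hgne
    obtain ⟨v, hvker, hvg⟩ := hg
    have hvne : v ≠ 0 := by
      intro h
      apply hgne
      rw [← hvg, h]
      rfl
    by_contra hcon
    push_neg at hcon
    -- Either g is everywhere nonneg or everywhere nonpos.
    by_cases hx : ∃ x : A, g x < 0
    · obtain ⟨x, hxlt⟩ := hx
      have hnonpos : ∀ a : A, g a ≤ 0 := by
        intro a
        exact hcon x a hxlt
      have : ψ (-v) ≠ 0 := by
        refine hψ (-v) (by simpa using hvne) ?_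
        intro a
        have : ((-v : V) : A → ℝ) a = -(g a) := by
          rw [← hvg]; rfl
        rw [this]
        linarith [hnonpos a]
      apply this
      rw [map_neg, LinearMap.mem_ker.1 hvker, neg_zero]
    · push_neg at hx
      have : ψ v ≠ 0 := by
        refine hψ v hvne ?_
        intro a
        have h2 : ((v : A → ℝ)) a = g a := congrFun hvg a
        rw [h2]
        exact hx a
      exact this (LinearMap.mem_ker.1 hvker)
end

section
/- Let n ≥ 2. Assume (i) for every compact K ⊂ ℝ^n, any subspace of C(K) whose nonzero elements all attain their maximum at exactly one point has dimension at most n, and (ii) every (n+2)-dimensional space of real-valued functions contains an (n+1)-dimensional alternating subspace. Then there is no (n+2)-dimensional subspace W of C₀(ℝ^n) with every nonzero element of W attaining its maximum at exactly one point; i.e., Ĉ₀(ℝ^n) is not (n+2)-lineable. -/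
open scoped ZeroAtInfty

/-- Let `n ≥ 2`. Assume (i) for every compact `K ⊆ ℝⁿ`, any subspace of `C(K)` whose nonzero
elements all attain their maximum at exactly one point has dimension at most `n`, and (ii)
every `(n+2)`-dimensional subspace of `C₀(ℝⁿ)` contains an `(n+1)`-dimensional subspace all
of whose nonzero elements are alternating. Then there is no `(n+2)`-dimensional subspace `W`
of `C₀(ℝⁿ)` with every nonzero element of `W` attaining its maximum at exactly one point,
i.e. `Ĉ₀(ℝⁿ)` is not `(n+2)`-lineable. -/
theorem stmt_15 (n : ℕ) (hn : 2 ≤ n)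
    (hK : ∀ K : Set (EuclideanSpace ℝ (Fin n)), IsCompact K →
      ∀ V : Submodule ℝ C(K, ℝ),
        (∀ f : C(K, ℝ), f ∈ V → f ≠ 0 → ∃! p : K, ∀ x : K, f x ≤ f p) →
        Module.rank ℝ V ≤ n)
    (halt : ∀ V : Submodule ℝ C₀(EuclideanSpace ℝ (Fin n), ℝ),
      Module.finrank ℝ V = n + 2 →
      ∃ W : Submodule ℝ C₀(EuclideanSpace ℝ (Fin n), ℝ), W ≤ V ∧
        Module.finrank ℝ W = n + 1 ∧
        ∀ g : C₀(EuclideanSpace ℝ (Fin n), ℝ), g ∈ W → g ≠ 0 →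
          ∃ x y : EuclideanSpace ℝ (Fin n), g x < 0 ∧ 0 < g y) :
    ¬ ∃ W : Submodule ℝ C₀(EuclideanSpace ℝ (Fin n), ℝ),
        Module.finrank ℝ W = n + 2 ∧
        ∀ g : C₀(EuclideanSpace ℝ (Fin n), ℝ), g ∈ W → g ≠ 0 →
          ∃! p : EuclideanSpace ℝ (Fin n), ∀ x, g x ≤ g p := by
  rintro ⟨W, hWdim, hWmax⟩
  obtain ⟨W', hW'le, hW'dim, hW'alt⟩ := halt W hWdim
  haveI : FiniteDimensional ℝ W' := FiniteDimensional.of_finrank_eq_succ hW'dim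
  set E := EuclideanSpace ℝ (Fin n)
  -- pointwise bound
  have hpw : ∀ (g : C₀(E, ℝ)) (x : E), |g x| ≤ ‖g‖ := by
    intro g x
    have := BoundedContinuousFunction.norm_coe_le_norm g.toBCF x
    simpa [ZeroAtInftyContinuousMap.norm_toBCF_eq_norm, Real.norm_eq_abs] using this
  -- each nonzero element of W' has a unique max point, with positive max
  have hmax : ∀ g : C₀(E, ℝ), g ∈ W' → g ≠ 0 →
      ∃ p, (∀ x, g x ≤ g p) ∧ 0 < g p ∧ ∀ q, (∀ x, g x ≤ g q) → q = p := by
    intro g hg hg0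
    obtain ⟨p, hp, hpu⟩ := hWmax g (hW'le hg) hg0
    obtain ⟨x, y, _, hy⟩ := hW'alt g hg hg0
    exact ⟨p, hp, lt_of_lt_of_le hy (hp y), hpu⟩
  -- sphere of W' is compact
  have hScomp : IsCompact (Metric.sphere (0 : W') 1) := isCompact_sphere 0 1
  -- local trapping of max points near each sphere point
  have key : ∀ s : W', s ∈ Metric.sphere (0 : W') 1 →
      ∃ r : ℝ, 0 < r ∧ ∃ Ks : Set E, IsCompact Ks ∧
        ∀ h : C₀(E, ℝ), ‖h - (s : C₀(E, ℝ))‖ < r →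
          ∀ q, (∀ x, h x ≤ h q) → q ∈ Ks := by
    intro s hs
    have hs0 : (s : C₀(E, ℝ)) ≠ 0 := by
      intro h0
      have : s = 0 := Subtype.ext h0
      simp [this] at hs
    obtain ⟨p, hp, hppos, -⟩ := hmax _ s.2 hs0
    set g : C₀(E, ℝ) := (s : C₀(E, ℝ))
    set a := g p with ha
    refine ⟨a / 3, by positivity, ?_⟩
    have : ∀ᶠ x in Filter.cocompact E, dist (g x) 0 < a / 3 :=
      Metric.tendsto_nhds.mp (zero_at_infty g) (a / 3) (by positivity)
    rw [Filter.hasBasis_cocompact.eventually_iff] at this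
    obtain ⟨Ks, hKsc, hKsb⟩ := this
    refine ⟨Ks, hKsc, ?_⟩
    intro h hhg q hq
    by_contra hqK
    have hb : |g q| < a / 3 := by
      simpa [Real.dist_eq] using hKsb hqK
    have h1 : |h q - g q| ≤ ‖h - g‖ := by simpa using hpw (h - g) q
    have h2 : |h p - g p| ≤ ‖h - g‖ := by simpa using hpw (h - g) p
    have : h p ≤ h q := hq p
    have : a - a/3 < h p := by
      have := abs_lt.mp (lt_of_le_of_lt h2 hhg)
      linarith [this.1]
    have : h q < a/3 + a/3 := by
      have h1' := abs_lt.mp (lt_of_le_of_lt h1 hhg)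
      have hb' := abs_lt.mp hb
      linarith [h1'.2, hb'.2]
    linarith [hq p]
  choose! r hr Ks hKsc hKs using key
  -- finite subcover
  obtain ⟨t, ht⟩ := hScomp.elim_finite_subcover
    (fun s : Metric.sphere (0 : W') 1 => Metric.ball (s : W') (r s))
    (fun s => Metric.isOpen_ball)
    (fun s hs => Set.mem_iUnion.mpr ⟨⟨s, hs⟩, by
      exact Metric.mem_ball_self (hr s hs)⟩)
  set K : Set E := ⋃ i ∈ t, Ks i with hKdef
  have hKcomp : IsCompact K := t.finite_toSet.isCompact_biUnion (fun i _ => hKsc i i.2)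
  -- all max points of nonzero elements of W' lie in K
  have htrap : ∀ g : C₀(E, ℝ), g ∈ W' → g ≠ 0 → ∀ q, (∀ x, g x ≤ g q) → q ∈ K := by
    intro g hg hg0 q hq
    set gw : W' := ⟨g, hg⟩ with hgw
    have hgw0 : gw ≠ 0 := by
      intro h0; exact hg0 (by simpa [hgw] using congrArg Subtype.val h0)
    have hnorm : ‖gw‖ ≠ 0 := (norm_ne_zero_iff (a := gw)).mpr hgw0
    set s : W' := ‖gw‖⁻¹ • gw with hsdef
    have hsS : s ∈ Metric.sphere (0 : W') 1 := by
      have h0 : ((0 : W') : C₀(E, ℝ)) = 0 := rfl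
      have hcoe : ‖gw‖ = ‖g‖ := Submodule.coe_norm gw
      rw [Metric.mem_sphere, Subtype.dist_eq, h0, dist_zero_right, hsdef]
      have hns : ‖(‖gw‖⁻¹ • (gw : C₀(E, ℝ)))‖ = ‖(‖gw‖⁻¹ : ℝ)‖ * ‖(gw : C₀(E, ℝ))‖ :=
        by exact norm_smul (‖gw‖⁻¹) ((gw : C₀(E, ℝ)))
      rw [show ((‖gw‖⁻¹ • gw : W') : C₀(E, ℝ)) = ‖gw‖⁻¹ • (gw : C₀(E, ℝ)) from rfl, hns,
        norm_inv, norm_norm, ← Submodule.coe_norm, inv_mul_cancel₀ hnorm]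
    have := ht hsS
    rw [Set.mem_iUnion₂] at this
    obtain ⟨i, hit, hi⟩ := this
    rw [Metric.mem_ball, Subtype.dist_eq, dist_eq_norm] at hi
    have hdist : ‖(s : C₀(E, ℝ)) - ((i : W') : C₀(E, ℝ))‖ < r i := hi
    have hmaxs : ∀ x, (s : C₀(E, ℝ)) x ≤ (s : C₀(E, ℝ)) q := by
      intro x
      have hc : (0:ℝ) < ‖gw‖⁻¹ := by positivity
      have : (s : C₀(E, ℝ)) = ‖gw‖⁻¹ • g := by rfl
      rw [this]
      simpa using mul_le_mul_of_nonneg_left (hq x) (le_of_lt hc)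
    have := hKs i i.2 (s : C₀(E, ℝ)) hdist q hmaxs
    exact Set.mem_biUnion hit this
  -- restriction linear map to C(K, ℝ)
  let res : C₀(E, ℝ) →ₗ[ℝ] C(K, ℝ) :=
    { toFun := fun g => ⟨fun x => g x, g.continuous.comp continuous_subtype_val⟩
      map_add' := fun f g => ContinuousMap.ext fun x => rfl
      map_smul' := fun c f => ContinuousMap.ext fun x => rfl }
  let e : W' →ₗ[ℝ] C(K, ℝ) := res.comp W'.subtype
  have he : Function.Injective e := by
    rw [injective_iff_map_eq_zero]
    intro m hm
    by_contra hm0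
    have hmC0 : (m : C₀(E, ℝ)) ≠ 0 := fun h0 => hm0 (Subtype.ext h0)
    obtain ⟨p, hp, hppos, -⟩ := hmax _ m.2 hmC0
    have hpK : p ∈ K := htrap _ m.2 hmC0 p hp
    have : e m ⟨p, hpK⟩ = 0 := by rw [hm]; rfl
    have : (m : C₀(E, ℝ)) p = 0 := this
    linarith
  set V : Submodule ℝ C(K, ℝ) := LinearMap.range e with hVdef
  have hVmax : ∀ f : C(K, ℝ), f ∈ V → f ≠ 0 → ∃! p : K, ∀ x : K, f x ≤ f p := by
    intro f hf hf0
    obtain ⟨gw, rfl⟩ := hf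
    have hgw0 : gw ≠ 0 := by rintro rfl; simp at hf0
    have hgC0 : (gw : C₀(E, ℝ)) ≠ 0 := fun h0 => hgw0 (Subtype.ext h0)
    obtain ⟨p, hp, hppos, hpu⟩ := hmax _ gw.2 hgC0
    have hpK : p ∈ K := htrap _ gw.2 hgC0 p hp
    refine ⟨⟨p, hpK⟩, fun x => hp x, ?_⟩
    intro q hq
    have hq' : ∀ x, (gw : C₀(E, ℝ)) x ≤ (gw : C₀(E, ℝ)) (q : E) := by
      intro x
      calc (gw : C₀(E, ℝ)) x ≤ (gw : C₀(E, ℝ)) p := hp x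
        _ ≤ (gw : C₀(E, ℝ)) (q : E) := hq ⟨p, hpK⟩
    exact Subtype.ext (hpu _ hq')
  have hrank := hK K hKcomp V hVmax
  have h1 : Module.rank ℝ ↥W' = ((n + 1 : ℕ) : Cardinal) := by
    have h2 := Module.finrank_eq_rank ℝ ↥W'
    rw [hW'dim] at h2
    exact h2.symm
  have hrankV : Module.rank ℝ V = ((n + 1 : ℕ) : Cardinal) := by
    rw [hVdef, rank_range_of_injective e he, h1]
  rw [hrankV] at hrank
  have : n + 1 ≤ n := by exact_mod_cast hrank
  omega
end
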